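/- Let n ≥ 3, let W be a four-linear form on ℝⁿ with the symmetries of a Weyl tensor, let h_{ab}(x) = (1/3)∑_{p,q=1}^n W_{apbq}x_px_q, and for a, b ∈ {1,…,n} define L⁰_{ab}(x) = −(1/(3n)) (∑_{p,q=1}^n W_{apbq} x_p x_q) (1 + |x|²/(n(n−2)))^{−n/2}. Then L⁰_{ab} solves the linearized bubble equation with source: −∑_{i=1}^n ∂²_{ii} L⁰_{ab}(x) − (2*−1) B_{1,0}(x)^{2*−2} L⁰_{ab}(x) = −(2/(n(n−2))) h_{ab}(x) (1 + |x|²/(n(n−2)))^{−(n+2)/2} for all x ∈ ℝⁿ, where 2* = 2n/(n−2) and B_{1,0}(x) = (1 + |x|²/(n(n−2)))^{−(n−2)/2}. -/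

import Mathlib

open MeasureTheory Real

noncomputable section

/-- The Euclidean space `ℝⁿ`. -/
abbrev En (n : ℕ) := EuclideanSpace ℝ (Fin n)

/-- Partial derivative in the `i`-th coordinate direction. -/
noncomputable def pd {n : ℕ} (i : Fin n) (f : En n → ℝ) (x : En n) : ℝ :=
  fderiv ℝ f x (EuclideanSpace.single i 1)

/-- `W` has the symmetries of a Weyl tensor. -/
def IsWeyl (n : ℕ) (W : Fin n → Fin n → Fin n → Fin n → ℝ) : Prop :=
  (∀ i j k l, W i j k l = -W j i k l) ∧
  (∀ i j k l, W i j k l = -W i j l k) ∧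
  (∀ i j k l, W i j k l = W k l i j) ∧
  (∀ j l, ∑ i, W i j i l = 0) ∧
  (∀ i j k l, W i j k l + W j k i l + W k i j l = 0)

/-- The quadratic field associated to `W`: `h_{ab}(x) = (1/3)∑_{p,q} W_{apbq} x_p x_q`. -/
noncomputable def hW (n : ℕ) (W : Fin n → Fin n → Fin n → Fin n → ℝ)
    (x : En n) (a b : Fin n) : ℝ :=
  (1 / 3) * ∑ p, ∑ q, W a p b q * x p * x q

/-- The standard bubble with `t = 1`, `z = 0`:
`B_{1,0}(x) = (1 + |x|²/(n(n-2)))^{-(n-2)/2}`. -/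
noncomputable def Bub10 (n : ℕ) (x : En n) : ℝ :=
  (1 + ‖x‖ ^ 2 / ((n : ℝ) * ((n : ℝ) - 2))) ^ (-(((n : ℝ) - 2) / 2))

/-- `L⁰_{ab}(x) = -(1/(3n)) (∑_{p,q} W_{apbq} x_p x_q)(1 + |x|²/(n(n-2)))^{-n/2}`. -/
noncomputable def L0 (n : ℕ) (W : Fin n → Fin n → Fin n → Fin n → ℝ)
    (a b : Fin n) (x : En n) : ℝ :=
  -(1 / (3 * (n : ℝ))) * (∑ p, ∑ q, W a p b q * x p * x q) *
    (1 + ‖x‖ ^ 2 / ((n : ℝ) * ((n : ℝ) - 2))) ^ (-((n : ℝ) / 2))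


namespace Aux16

variable {n : ℕ}

def LN (x : En n) : En n →L[ℝ] ℝ := ∑ j, (2 * x j) • (EuclideanSpace.proj j : En n →L[ℝ] ℝ)

lemma hasFDerivAt_N (x : En n) :
    HasFDerivAt (fun y : En n => ∑ j, y j ^ 2) (LN x) x := by
  have : HasFDerivAt (fun y : En n => ∑ j, y j * y j)
      (∑ j, ((x j) • (EuclideanSpace.proj j : En n →L[ℝ] ℝ)
        + (x j) • (EuclideanSpace.proj j : En n →L[ℝ] ℝ))) x := by
    apply HasFDerivAt.fun_sum
    intro j _
    exact ((EuclideanSpace.proj j : En n →L[ℝ] ℝ).hasFDerivAt).mul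
      ((EuclideanSpace.proj j : En n →L[ℝ] ℝ).hasFDerivAt)
  have h2 : (fun y : En n => ∑ j, y j * y j) = (fun y : En n => ∑ j, y j ^ 2) := by
    funext y; simp [sq]
  rw [h2] at this
  convert this using 1
  rw [LN]
  congr 1; funext j
  rw [two_mul, add_smul]

lemma LN_apply (x : En n) (i : Fin n) : LN x (EuclideanSpace.single i 1) = 2 * x i := by
  simp [LN, EuclideanSpace.single_apply]

lemma pd_eq {i : Fin n} {f : En n → ℝ} {L : En n →L[ℝ] ℝ} {x : En n}
    (h : HasFDerivAt f L x) :
    fderiv ℝ f x (EuclideanSpace.single i 1) = L (EuclideanSpace.single i 1) := by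
  rw [h.fderiv]

lemma G_pos {lam : ℝ} (hlam : 0 < lam) (x : En n) : 0 < 1 + (∑ j, x j ^ 2) / lam := by
  have : 0 ≤ (∑ j, x j ^ 2) / lam := by positivity
  linarith

lemma keyHas (lam r : ℝ) (hlam : 0 < lam) (P : En n → ℝ) (Lp : En n →L[ℝ] ℝ) (x : En n)
    (hP : HasFDerivAt P Lp x) :
    HasFDerivAt (fun y : En n => P y * (1 + (∑ j, y j ^ 2) / lam) ^ r)
      (((1 + (∑ j, x j ^ 2) / lam) ^ r) • Lp
        + (P x * (r * (1 + (∑ j, x j ^ 2) / lam) ^ (r - 1) * lam⁻¹)) • LN x) x := by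
  have hG : HasFDerivAt (fun y : En n => 1 + (∑ j, y j ^ 2) / lam) (lam⁻¹ • LN x) x := by
    have := ((hasFDerivAt_N x).mul_const lam⁻¹).const_add (1:ℝ)
    simpa [div_eq_mul_inv] using this
  have hGr := hG.rpow_const (p := r) (Or.inl (ne_of_gt (G_pos hlam x)))
  have := hP.mul hGr
  refine this.congr_fderiv ?_
  rw [smul_smul]
  module

/-- derivative of the quadratic form `Q y = ∑ p, ∑ q, M p q * y p * y q`. -/
def LQ (M : Fin n → Fin n → ℝ) (x : En n) : En n →L[ℝ] ℝ :=
  ∑ p, ∑ q, (M p q) • ((x p) • (EuclideanSpace.proj q : En n →L[ℝ] ℝ)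
    + (x q) • (EuclideanSpace.proj p : En n →L[ℝ] ℝ))

lemma hasFDerivAt_Q (M : Fin n → Fin n → ℝ) (x : En n) :
    HasFDerivAt (fun y : En n => ∑ p, ∑ q, M p q * y p * y q) (LQ M x) x := by
  have : HasFDerivAt (fun y : En n => ∑ p, ∑ q, M p q * (y p * y q)) (LQ M x) x := by
    apply HasFDerivAt.fun_sum; intro p _
    apply HasFDerivAt.fun_sum; intro q _
    exact (((EuclideanSpace.proj p : En n →L[ℝ] ℝ).hasFDerivAt).mul
      ((EuclideanSpace.proj q : En n →L[ℝ] ℝ).hasFDerivAt)).const_mul (M p q)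
  have heq : (fun y : En n => ∑ p, ∑ q, M p q * (y p * y q))
      = (fun y : En n => ∑ p, ∑ q, M p q * y p * y q) := by
    funext y; simp only [mul_assoc]
  rw [heq] at this; exact this

lemma LQ_apply (M : Fin n → Fin n → ℝ) (x : En n) (i : Fin n) :
    LQ M x (EuclideanSpace.single i 1)
      = (∑ q, M i q * x q) + (∑ p, M p i * x p) := by
  simp only [LQ, ContinuousLinearMap.sum_apply, ContinuousLinearMap.smul_apply,
    ContinuousLinearMap.add_apply]
  have h : ∀ p q : Fin n,
      M p q • (x p • (EuclideanSpace.proj q : En n →L[ℝ] ℝ) (EuclideanSpace.single i 1)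
        + x q • (EuclideanSpace.proj p : En n →L[ℝ] ℝ) (EuclideanSpace.single i 1))
      = M p q * (x p * (if q = i then 1 else 0) + x q * (if p = i then 1 else 0)) := by
    intro p q
    simp [EuclideanSpace.single_apply, smul_eq_mul]
  simp only [h, mul_add, Finset.sum_add_distrib]
  have e1 : (∑ p, ∑ q, M p q * (x p * if q = i then 1 else 0)) = ∑ p, M p i * x p :=
    Finset.sum_congr rfl fun p _ => by
      simp [mul_ite, Finset.sum_ite_eq', mul_comm]
  have e2 : (∑ p, ∑ q, M p q * (x q * if p = i then 1 else 0)) = ∑ q, M i q * x q := by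
    have e : ∀ p, (∑ q, M p q * (x q * if p = i then 1 else 0))
        = if p = i then ∑ q, M i q * x q else 0 := by
      intro p; split
      · subst ‹p = i›; simp
      · simp [*]
    rw [Finset.sum_congr rfl fun p _ => e p, Finset.sum_ite_eq' Finset.univ i]
    simp
  rw [e1, e2, add_comm]

lemma key (lam r : ℝ) (hlam : 0 < lam) (P : En n → ℝ) (Lp : En n →L[ℝ] ℝ) (x : En n)
    (hP : HasFDerivAt P Lp x) (i : Fin n) :
    fderiv ℝ (fun y : En n => P y * (1 + (∑ j, y j ^ 2) / lam) ^ r) x (EuclideanSpace.single i 1)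
      = Lp (EuclideanSpace.single i 1) * (1 + (∑ j, x j ^ 2) / lam) ^ r
        + P x * r * (1 + (∑ j, x j ^ 2) / lam) ^ (r - 1) * (2 * x i) / lam := by
  rw [pd_eq (keyHas lam r hlam P Lp x hP)]
  simp only [ContinuousLinearMap.add_apply, ContinuousLinearMap.smul_apply, LN_apply,
    smul_eq_mul]
  ring

def Qf (M : Fin n → Fin n → ℝ) (y : En n) : ℝ := ∑ p, ∑ q, M p q * y p * y q
def Sf (M : Fin n → Fin n → ℝ) (i : Fin n) (y : En n) : ℝ :=
  (∑ q, M i q * y q) + (∑ p, M p i * y p)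

def LS (M : Fin n → Fin n → ℝ) (i : Fin n) : En n →L[ℝ] ℝ :=
  ∑ q, (M i q) • (EuclideanSpace.proj q : En n →L[ℝ] ℝ)
    + ∑ p, (M p i) • (EuclideanSpace.proj p : En n →L[ℝ] ℝ)

lemma hasFDerivAt_S (M : Fin n → Fin n → ℝ) (i : Fin n) (x : En n) :
    HasFDerivAt (Sf M i) (LS M i) x := by
  apply HasFDerivAt.add
  · apply HasFDerivAt.fun_sum; intro q _
    exact ((EuclideanSpace.proj q : En n →L[ℝ] ℝ).hasFDerivAt).const_mul (M i q)
  · apply HasFDerivAt.fun_sum; intro p _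
    exact ((EuclideanSpace.proj p : En n →L[ℝ] ℝ).hasFDerivAt).const_mul (M p i)

lemma LS_apply (M : Fin n → Fin n → ℝ) (i : Fin n) :
    LS M i (EuclideanSpace.single i 1) = M i i + M i i := by
  simp [LS, EuclideanSpace.single_apply, Finset.sum_ite_eq', mul_ite]

lemma pd_first (M : Fin n → Fin n → ℝ) (lam r c : ℝ) (hlam : 0 < lam)
    (i : Fin n) (y : En n) :
    fderiv ℝ (fun z : En n => c * Qf M z * (1 + (∑ j, z j ^ 2) / lam) ^ r) y
        (EuclideanSpace.single i 1)
      = c * Sf M i y * (1 + (∑ j, y j ^ 2) / lam) ^ r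
        + 2 * c * r / lam * (Qf M y * y i) * (1 + (∑ j, y j ^ 2) / lam) ^ (r - 1) := by
  have hP : HasFDerivAt (fun z : En n => c * Qf M z) (c • LQ M y) y :=
    (hasFDerivAt_Q M y).const_mul c
  rw [key lam r hlam _ (c • LQ M y) y hP i]
  rw [ContinuousLinearMap.smul_apply, LQ_apply]
  simp only [smul_eq_mul, Sf, Qf]
  ring

lemma pd_second (M : Fin n → Fin n → ℝ) (lam r c : ℝ) (hlam : 0 < lam)
    (i : Fin n) (x : En n) :
    fderiv ℝ (fun y : En n =>
        c * Sf M i y * (1 + (∑ j, y j ^ 2) / lam) ^ r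
        + 2 * c * r / lam * (Qf M y * y i) * (1 + (∑ j, y j ^ 2) / lam) ^ (r - 1)) x
        (EuclideanSpace.single i 1)
      = (1 + (∑ j, x j ^ 2) / lam) ^ r * (c * (M i i + M i i))
        + c * Sf M i x * (r * (1 + (∑ j, x j ^ 2) / lam) ^ (r - 1) * lam⁻¹) * (2 * x i)
        + ((1 + (∑ j, x j ^ 2) / lam) ^ (r - 1)
            * (2 * c * r / lam * (Qf M x * 1 + x i * Sf M i x))
          + 2 * c * r / lam * (Qf M x * x i)
            * ((r - 1) * (1 + (∑ j, x j ^ 2) / lam) ^ (r - 1 - 1) * lam⁻¹) * (2 * x i)) := by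
  have hA : HasFDerivAt (fun y : En n => c * Sf M i y) (c • LS M i) x :=
    (hasFDerivAt_S M i x).const_mul c
  have hB : HasFDerivAt (fun y : En n => 2 * c * r / lam * (Qf M y * y i))
      ((2 * c * r / lam) • (Qf M x • (EuclideanSpace.proj i : En n →L[ℝ] ℝ)
        + x i • LQ M x)) x :=
    ((hasFDerivAt_Q M x).mul
      ((EuclideanSpace.proj i : En n →L[ℝ] ℝ).hasFDerivAt)).const_mul _
  have H := (keyHas lam r hlam _ _ x hA).fun_add (keyHas lam (r - 1) hlam _ _ x hB)
  rw [pd_eq H]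
  simp only [ContinuousLinearMap.add_apply, ContinuousLinearMap.smul_apply, LN_apply,
    LS_apply, LQ_apply, smul_eq_mul]
  have hproj : (EuclideanSpace.proj i : En n →L[ℝ] ℝ) (EuclideanSpace.single i 1) = 1 := by
    simp [EuclideanSpace.single_apply]
  rw [hproj, Sf]

lemma T1_eq (M : Fin n → Fin n → ℝ) (x : En n) :
    ∑ i, Sf M i x * x i = 2 * Qf M x := by
  have e1 : ∑ i, Sf M i x * x i
      = (∑ i, ∑ q, M i q * x q * x i) + (∑ i, ∑ p, M p i * x p * x i) := by
    rw [← Finset.sum_add_distrib]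
    refine Finset.sum_congr rfl fun i _ => ?_
    rw [Sf, add_mul, Finset.sum_mul, Finset.sum_mul]
  have e2 : (∑ i, ∑ q, M i q * x q * x i) = Qf M x :=
    Finset.sum_congr rfl fun i _ => Finset.sum_congr rfl fun q _ => by ring
  have e3 : (∑ i, ∑ p, M p i * x p * x i) = Qf M x := by
    rw [Finset.sum_comm, Qf]
  rw [e1, e2, e3]; ring

lemma sum_pd2 (M : Fin n → Fin n → ℝ) (lam r c : ℝ) (x : En n)
    (htr : ∑ i, M i i = 0) :
    ∑ i : Fin n, ((1 + (∑ j, x j ^ 2) / lam) ^ r * (c * (M i i + M i i))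
        + c * Sf M i x * (r * (1 + (∑ j, x j ^ 2) / lam) ^ (r - 1) * lam⁻¹) * (2 * x i)
        + ((1 + (∑ j, x j ^ 2) / lam) ^ (r - 1)
            * (2 * c * r / lam * (Qf M x * 1 + x i * Sf M i x))
          + 2 * c * r / lam * (Qf M x * x i)
            * ((r - 1) * (1 + (∑ j, x j ^ 2) / lam) ^ (r - 1 - 1) * lam⁻¹) * (2 * x i)))
      = 2 * c * r / lam * ((n : ℝ) + 4) * Qf M x * (1 + (∑ j, x j ^ 2) / lam) ^ (r - 1)
        + 4 * c * r * (r - 1) / lam ^ 2 * Qf M x * (∑ i, x i ^ 2)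
            * (1 + (∑ j, x j ^ 2) / lam) ^ (r - 1 - 1) := by
  have step : ∑ i : Fin n, ((1 + (∑ j, x j ^ 2) / lam) ^ r * (c * (M i i + M i i))
        + c * Sf M i x * (r * (1 + (∑ j, x j ^ 2) / lam) ^ (r - 1) * lam⁻¹) * (2 * x i)
        + ((1 + (∑ j, x j ^ 2) / lam) ^ (r - 1)
            * (2 * c * r / lam * (Qf M x * 1 + x i * Sf M i x))
          + 2 * c * r / lam * (Qf M x * x i)
            * ((r - 1) * (1 + (∑ j, x j ^ 2) / lam) ^ (r - 1 - 1) * lam⁻¹) * (2 * x i)))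
      = (2 * c * (1 + (∑ j, x j ^ 2) / lam) ^ r) * (∑ i, M i i)
        + (2 * c * r * lam⁻¹ * (1 + (∑ j, x j ^ 2) / lam) ^ (r - 1)
            + 2 * c * r / lam * (1 + (∑ j, x j ^ 2) / lam) ^ (r - 1))
          * (∑ i, Sf M i x * x i)
        + (n : ℝ) * ((1 + (∑ j, x j ^ 2) / lam) ^ (r - 1) * (2 * c * r / lam * Qf M x))
        + (4 * c * r * (r - 1) * lam⁻¹ * lam⁻¹ * Qf M x
            * (1 + (∑ j, x j ^ 2) / lam) ^ (r - 1 - 1)) * (∑ i, x i ^ 2) := by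
    rw [Finset.mul_sum, Finset.mul_sum, Finset.mul_sum, ← Finset.sum_add_distrib]
    rw [show ((n : ℝ) * ((1 + (∑ j, x j ^ 2) / lam) ^ (r - 1) * (2 * c * r / lam * Qf M x)))
        = ∑ _i : Fin n, (1 + (∑ j, x j ^ 2) / lam) ^ (r - 1) * (2 * c * r / lam * Qf M x) by
      rw [Finset.sum_const, Finset.card_univ, Fintype.card_fin, nsmul_eq_mul]]
    rw [← Finset.sum_add_distrib, ← Finset.sum_add_distrib]
    refine Finset.sum_congr rfl fun i _ => ?_
    ring
  rw [step, htr, T1_eq]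
  ring

lemma trace (W : Fin n → Fin n → Fin n → Fin n → ℝ)
    (h1 : ∀ i j k l, W i j k l = -W j i k l)
    (h2 : ∀ i j k l, W i j k l = -W i j l k)
    (h3 : ∀ i j k l, W i j k l = W k l i j)
    (h4 : ∀ j l, ∑ i, W i j i l = 0) (a b : Fin n) :
    ∑ i, W a i b i = 0 := by
  have key : ∀ i, W a i b i = W i b i a := by
    intro i
    calc W a i b i = W b i a i := h3 a i b i
      _ = -W i b a i := h1 b i a i
      _ = -(-W i b i a) := by rw [← h2 i b a i]
      _ = W i b i a := neg_neg _
  rw [Finset.sum_congr rfl fun i _ => key i]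
  exact h4 b a

end Aux16
theorem stmt16 (n : ℕ) (hn : 3 ≤ n) (W : Fin n → Fin n → Fin n → Fin n → ℝ)
    (hWeyl : IsWeyl n W) (a b : Fin n) (x : En n) :
    -(∑ i : Fin n, pd i (fun y => pd i (L0 n W a b) y) x) -
        (2 * (n : ℝ) / ((n : ℝ) - 2) - 1) *
          Bub10 n x ^ (2 * (n : ℝ) / ((n : ℝ) - 2) - 2) * L0 n W a b x =
      -(2 / ((n : ℝ) * ((n : ℝ) - 2))) * hW n W x a b *
        (1 + ‖x‖ ^ 2 / ((n : ℝ) * ((n : ℝ) - 2))) ^ (-(((n : ℝ) + 2) / 2)) := by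
  obtain ⟨h1, h2, h3, h4, h5⟩ := hWeyl
  have h3n : (3 : ℝ) ≤ (n : ℝ) := by exact_mod_cast hn
  have hnpos : (0 : ℝ) < (n : ℝ) := by linarith
  have hn0 : (n : ℝ) ≠ 0 := ne_of_gt hnpos
  have hn2 : (0 : ℝ) < (n : ℝ) - 2 := by linarith
  have hn2' : (n : ℝ) - 2 ≠ 0 := ne_of_gt hn2
  have hlam : (0 : ℝ) < (n : ℝ) * ((n : ℝ) - 2) := mul_pos hnpos hn2
  have hnorm : ∀ y : En n, ‖y‖ ^ 2 = ∑ j, y j ^ 2 := by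
    intro y
    rw [EuclideanSpace.norm_eq, Real.sq_sqrt (by positivity)]
    simp [sq_abs]
  have hL0 : L0 n W a b = fun z : En n =>
      -(1 / (3 * (n : ℝ))) * Aux16.Qf (fun p q => W a p b q) z
        * (1 + (∑ j, z j ^ 2) / ((n : ℝ) * ((n : ℝ) - 2))) ^ (-((n : ℝ) / 2)) := by
    funext z
    simp only [L0, Aux16.Qf]
    rw [hnorm z]
  have hpd2 : ∀ i : Fin n, pd i (fun y => pd i (L0 n W a b) y) x
      = (1 + (∑ j, x j ^ 2) / ((n : ℝ) * ((n : ℝ) - 2))) ^ (-((n : ℝ) / 2)) * ((-(1 / (3 * (n : ℝ)))) * (W a i b i + W a i b i))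
        + (-(1 / (3 * (n : ℝ)))) * Aux16.Sf (fun p q => W a p b q) i x * ((-((n : ℝ) / 2)) * (1 + (∑ j, x j ^ 2) / ((n : ℝ) * ((n : ℝ) - 2))) ^ ((-((n : ℝ) / 2)) - 1) * ((n : ℝ) * ((n : ℝ) - 2))⁻¹) * (2 * x i)
        + ((1 + (∑ j, x j ^ 2) / ((n : ℝ) * ((n : ℝ) - 2))) ^ ((-((n : ℝ) / 2)) - 1)
            * (2 * (-(1 / (3 * (n : ℝ)))) * (-((n : ℝ) / 2)) / ((n : ℝ) * ((n : ℝ) - 2)) * (Aux16.Qf (fun p q => W a p b q) x * 1 + x i * Aux16.Sf (fun p q => W a p b q) i x))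
          + 2 * (-(1 / (3 * (n : ℝ)))) * (-((n : ℝ) / 2)) / ((n : ℝ) * ((n : ℝ) - 2)) * (Aux16.Qf (fun p q => W a p b q) x * x i)
            * (((-((n : ℝ) / 2)) - 1) * (1 + (∑ j, x j ^ 2) / ((n : ℝ) * ((n : ℝ) - 2))) ^ ((-((n : ℝ) / 2)) - 1 - 1) * ((n : ℝ) * ((n : ℝ) - 2))⁻¹) * (2 * x i)) := by
    intro i
    have hinner : (fun y => pd i (L0 n W a b) y)
        = fun y : En n => (-(1 / (3 * (n : ℝ)))) * Aux16.Sf (fun p q => W a p b q) i y * (1 + (∑ j, y j ^ 2) / ((n : ℝ) * ((n : ℝ) - 2))) ^ (-((n : ℝ) / 2))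
          + 2 * (-(1 / (3 * (n : ℝ)))) * (-((n : ℝ) / 2)) / ((n : ℝ) * ((n : ℝ) - 2)) * (Aux16.Qf (fun p q => W a p b q) y * y i) * (1 + (∑ j, y j ^ 2) / ((n : ℝ) * ((n : ℝ) - 2))) ^ ((-((n : ℝ) / 2)) - 1) := by
      funext y
      show fderiv ℝ (L0 n W a b) y (EuclideanSpace.single i 1) = _
      rw [hL0]
      exact Aux16.pd_first (fun p q => W a p b q) ((n : ℝ) * ((n : ℝ) - 2)) (-((n : ℝ) / 2)) (-(1 / (3 * (n : ℝ)))) hlam i y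
    show fderiv ℝ _ x (EuclideanSpace.single i 1) = _
    rw [hinner]
    exact Aux16.pd_second (fun p q => W a p b q) ((n : ℝ) * ((n : ℝ) - 2)) (-((n : ℝ) / 2)) (-(1 / (3 * (n : ℝ)))) hlam i x
  have htr := Aux16.trace W h1 h2 h3 h4 a b
  have hsum := (Finset.sum_congr rfl (fun i _ => hpd2 i) :
      (∑ i : Fin n, pd i (fun y => pd i (L0 n W a b) y) x) = _).trans
    (Aux16.sum_pd2 (fun p q => W a p b q) ((n : ℝ) * ((n : ℝ) - 2)) (-((n : ℝ) / 2)) (-(1 / (3 * (n : ℝ)))) x htr)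
  rw [hsum]
  simp only [hL0, Bub10, hW, Aux16.Qf]
  rw [hnorm x]
  set g := (1 + (∑ j, x j ^ 2) / ((n : ℝ) * ((n : ℝ) - 2))) with hgdef
  have hg : (0 : ℝ) < g := by rw [hgdef]; exact Aux16.G_pos hlam x
  have hgne : g ≠ 0 := ne_of_gt hg
  have hT2 : (∑ i : Fin n, x i ^ 2) = ((n : ℝ) * ((n : ℝ) - 2)) * (g - 1) := by
    rw [hgdef]; field_simp; ring
  have hbub : (g ^ (-(((n : ℝ) - 2) / 2))) ^ (2 * (n : ℝ) / ((n : ℝ) - 2) - 2)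
      = (g ^ 2)⁻¹ := by
    rw [← Real.rpow_mul hg.le]
    rw [show (-(((n : ℝ) - 2) / 2)) * (2 * (n : ℝ) / ((n : ℝ) - 2) - 2) = -2 by
      field_simp; ring]
    rw [show ((-2 : ℝ)) = -((2 : ℕ) : ℝ) by norm_num, Real.rpow_neg hg.le,
      Real.rpow_natCast]
  have hBv : g ^ ((-((n : ℝ) / 2)) - 1) = g ^ (-((n : ℝ) / 2)) / g := by
    rw [Real.rpow_sub hg, Real.rpow_one]
  have hCv : g ^ ((-((n : ℝ) / 2)) - 1 - 1) = g ^ (-((n : ℝ) / 2)) / g / g := by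
    rw [Real.rpow_sub hg, Real.rpow_one, hBv]
  have hrhs : g ^ (-(((n : ℝ) + 2) / 2)) = g ^ (-((n : ℝ) / 2)) / g := by
    rw [show -(((n : ℝ) + 2) / 2) = (-((n : ℝ) / 2)) - 1 by ring, hBv]
  rw [hT2, hbub, hCv, hBv, hrhs]
  field_simp
  ring
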